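/- In the fractional-order HK model, the opinion diameter is nonincreasing relative to its initial value: d(k) = x_M(k) − x_m(k) satisfies d(k) ≤ d(0) for all k ≥ 0; in particular, if d(0) ≤ ε then all agents remain mutual neighbors for all time (the interaction graph stays complete). -/

import Mathlib

open Finset Filter Topology

/-- The Grünwald–Letnikov coefficient `a_k^{(α)} = (-1)^k * α(α-1)⋯(α-k+1)/k!`
(with `a_0 = 1`). -/
noncomputable def glCoeff (α : ℝ) (k : ℕ) : ℝ :=
  (-1) ^ k * (∏ i ∈ Finset.range k, (α - (i : ℝ))) / (Nat.factorial k : ℝ)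

/-- Neighbor set of agent `i` at time `k` (includes `i` itself). -/
noncomputable def nbr {n : ℕ} (ε : ℝ) (x : ℕ → Fin n → ℝ) (k : ℕ) (i : Fin n) :
    Finset (Fin n) :=
  Finset.univ.filter (fun j => |x k i - x k j| ≤ ε)

/-- The fractional-order Hegselmann–Krause dynamics. -/
def IsFracHK {n : ℕ} (ε α : ℝ) (x : ℕ → Fin n → ℝ) : Prop :=
  ∀ k i,
    x (k + 1) i =
      (∑ j ∈ (nbr ε x k i).erase i, x k j) / ((nbr ε x k i).card : ℝ) +
        (1 / ((nbr ε x k i).card : ℝ)) *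
          ((∑ s ∈ Finset.range k, |glCoeff α (k + 1 - s)| * x s i) +
            (1 - ∑ s ∈ Finset.range k, |glCoeff α (k + 1 - s)|) * x k i)

lemma negpow_prod_nonneg {α : ℝ} (hα1 : α ≤ 1) (m : ℕ) :
    0 ≤ (-1:ℝ)^m * ∏ i ∈ Finset.range m, (α - 1 - (i:ℝ)) := by
  have h : (-1:ℝ)^m * ∏ i ∈ Finset.range m, (α - 1 - (i:ℝ))
      = ∏ i ∈ Finset.range m, (1 - α + (i:ℝ)) := by
    rw [show ((-1:ℝ)^m) = ∏ _i ∈ Finset.range m, (-1:ℝ) by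
      rw [Finset.prod_const, card_range], ← Finset.prod_mul_distrib]
    exact Finset.prod_congr rfl (fun i _ => by ring)
  rw [h]
  refine Finset.prod_nonneg (fun i _ => ?_)
  have : (0:ℝ) ≤ (i:ℝ) := Nat.cast_nonneg i
  linarith

lemma glCoeff_nonpos {α : ℝ} (hα : α ∈ Set.Ioo (0:ℝ) 1) {k : ℕ} (hk : 1 ≤ k) :
    glCoeff α k ≤ 0 := by
  obtain ⟨m, rfl⟩ := Nat.exists_eq_add_of_le hk
  unfold glCoeff
  have hp : ∏ i ∈ Finset.range (1 + m), (α - (i : ℝ))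
      = α * ∏ i ∈ Finset.range m, (α - 1 - (i:ℝ)) := by
    rw [show 1 + m = m + 1 from Nat.add_comm 1 m, Finset.prod_range_succ',
      Finset.prod_congr rfl (fun i (_ : i ∈ Finset.range m) =>
        show α - ((i+1 : ℕ) : ℝ) = α - 1 - (i:ℝ) from by push_cast; ring)]
    norm_num
    ring
  rw [hp]
  have h1 : (-1:ℝ)^(1+m) = -(-1:ℝ)^m := by rw [pow_add]; ring
  rw [h1]
  have h2 := negpow_prod_nonneg hα.2.le m
  have h3 : (0:ℝ) < Nat.factorial (1+m) := by exact_mod_cast Nat.factorial_pos _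
  apply div_nonpos_of_nonpos_of_nonneg _ h3.le
  nlinarith [hα.1]

lemma glCoeff_sum (α : ℝ) (m : ℕ) :
    ∑ j ∈ Finset.range (m+1), glCoeff α j
      = (-1:ℝ)^m * (∏ i ∈ Finset.range m, (α - 1 - (i:ℝ))) / (Nat.factorial m : ℝ) := by
  induction m with
  | zero => simp [glCoeff]
  | succ m ih =>
      rw [Finset.sum_range_succ, ih]
      unfold glCoeff
      have hp : ∏ i ∈ Finset.range (m + 1), (α - (i : ℝ))
          = α * ∏ i ∈ Finset.range m, (α - 1 - (i:ℝ)) := by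
        rw [Finset.prod_range_succ',
          Finset.prod_congr rfl (fun i (_ : i ∈ Finset.range m) =>
            show α - ((i+1 : ℕ) : ℝ) = α - 1 - (i:ℝ) from by push_cast; ring)]
        norm_num
        ring
      rw [hp, Finset.prod_range_succ]
      have hfm : (Nat.factorial m : ℝ) ≠ 0 := by exact_mod_cast (Nat.factorial_pos m).ne'
      have hfm1 : (Nat.factorial (m+1) : ℝ) = (m+1) * Nat.factorial m := by
        rw [Nat.factorial_succ]; push_cast; ring
      rw [hfm1, pow_succ]
      field_simp
      ring

lemma sumAbs {α : ℝ} (hα : α ∈ Set.Ioo (0:ℝ) 1) (k : ℕ) :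
    ∑ s ∈ Finset.range k, |glCoeff α (k + 1 - s)| ≤ 1 := by
  have hre : ∑ s ∈ Finset.range k, |glCoeff α (k + 1 - s)|
      = ∑ s ∈ Finset.range k, |glCoeff α (s + 2)| := by
    rw [← Finset.sum_range_reflect]
    refine Finset.sum_congr rfl (fun s hs => ?_)
    have hs' := Finset.mem_range.mp hs
    have he : k + 1 - (k - 1 - s) = s + 2 := by omega
    rw [he]
  have habs : ∀ s : ℕ, |glCoeff α (s + 2)| = -glCoeff α (s + 2) := fun s =>
    abs_of_nonpos (glCoeff_nonpos hα (by omega))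
  have hsplit : ∑ j ∈ Finset.range (k+2), glCoeff α j
      = (∑ s ∈ Finset.range k, glCoeff α (s+2)) + glCoeff α 1 + glCoeff α 0 := by
    rw [Finset.sum_range_succ' (fun j => glCoeff α j) (k+1),
        Finset.sum_range_succ' (fun j => glCoeff α (j+1)) k]
  have h0 : glCoeff α 0 = 1 := by simp [glCoeff]
  have h1 : glCoeff α 1 = -α := by simp [glCoeff]
  have hT : 0 ≤ ∑ j ∈ Finset.range (k+2), glCoeff α j := by
    rw [show k + 2 = (k+1) + 1 by ring, glCoeff_sum]
    have := negpow_prod_nonneg hα.2.le (k+1)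
    have h3 : (0:ℝ) < Nat.factorial (k+1) := by exact_mod_cast Nat.factorial_pos _
    positivity
  rw [hre]
  have : ∑ s ∈ Finset.range k, |glCoeff α (s + 2)|
      = -(∑ s ∈ Finset.range k, glCoeff α (s+2)) := by
    rw [← Finset.sum_neg_distrib]
    exact Finset.sum_congr rfl (fun s _ => habs s)
  rw [this]
  have := hα.1
  linarith [hT, hsplit.symm, hsplit]

theorem fracHK_diameter_le_initial {n : ℕ} (hn : 0 < n) (ε α : ℝ)
    (hε : ε ∈ Set.Ioc (0:ℝ) 1) (hα : α ∈ Set.Ioo (0:ℝ) 1)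
    (x : ℕ → Fin n → ℝ) (hx0 : ∀ i, x 0 i ∈ Set.Icc (0:ℝ) 1)
    (hdyn : IsFracHK ε α x)
    (hne : (Finset.univ : Finset (Fin n)).Nonempty := Finset.univ_nonempty_iff.2 ⟨⟨0, hn⟩⟩) :
    (∀ k, Finset.univ.sup' hne (x k) - Finset.univ.inf' hne (x k) ≤
        Finset.univ.sup' hne (x 0) - Finset.univ.inf' hne (x 0)) ∧
      (Finset.univ.sup' hne (x 0) - Finset.univ.inf' hne (x 0) ≤ ε →
        ∀ k (i j : Fin n), j ∈ nbr ε x k i) := by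
  set M0 := Finset.univ.sup' hne (x 0) with hM0
  set m0 := Finset.univ.inf' hne (x 0) with hm0
  have key : ∀ k i, m0 ≤ x k i ∧ x k i ≤ M0 := by
    intro k
    induction k using Nat.strong_induction_on with
    | _ k ih =>
      match k with
      | 0 =>
        intro i
        exact ⟨Finset.inf'_le _ (Finset.mem_univ i), Finset.le_sup' _ (Finset.mem_univ i)⟩
      | (k+1) =>
        intro i
        have hup : ∀ s ≤ k, ∀ j, x s j ≤ M0 := fun s hs j =>
          (ih s (Nat.lt_succ_of_le hs) j).2
        have hlo : ∀ s ≤ k, ∀ j, m0 ≤ x s j := fun s hs j =>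
          (ih s (Nat.lt_succ_of_le hs) j).1
        have hi : i ∈ nbr ε x k i := by
          simp only [nbr, Finset.mem_filter, Finset.mem_univ, true_and, sub_self, abs_zero]
          exact hε.1.le
        have hcard : 1 ≤ (nbr ε x k i).card := Finset.card_pos.mpr ⟨i, hi⟩
        have hNR : (0:ℝ) < ((nbr ε x k i).card : ℝ) := by exact_mod_cast hcard
        set S := ∑ s ∈ Finset.range k, |glCoeff α (k + 1 - s)| with hS
        have hS0 : 0 ≤ S := Finset.sum_nonneg (fun s _ => abs_nonneg _)
        have hS1 : S ≤ 1 := sumAbs hα k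
        have hA : ∑ j ∈ (nbr ε x k i).erase i, x k j
            ≤ (((nbr ε x k i).card : ℝ) - 1) * M0 := by
          have h := Finset.sum_le_card_nsmul ((nbr ε x k i).erase i) (x k) M0
            (fun j _ => hup k le_rfl j)
          rw [Finset.card_erase_of_mem hi, nsmul_eq_mul] at h
          have : (((nbr ε x k i).card - 1 : ℕ) : ℝ) = ((nbr ε x k i).card : ℝ) - 1 := by
            push_cast [Nat.cast_sub hcard]; ring
          rw [this] at h
          exact h
        have hB : ∑ s ∈ Finset.range k, |glCoeff α (k + 1 - s)| * x s i ≤ S * M0 := by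
          rw [hS, Finset.sum_mul]
          refine Finset.sum_le_sum (fun s hs => ?_)
          exact mul_le_mul_of_nonneg_left
            (hup s (Nat.le_of_lt_succ (Nat.lt_succ_of_lt (Finset.mem_range.mp hs))) i)
            (abs_nonneg _)
        have hB' : S * m0 ≤ ∑ s ∈ Finset.range k, |glCoeff α (k + 1 - s)| * x s i := by
          rw [hS, Finset.sum_mul]
          refine Finset.sum_le_sum (fun s hs => ?_)
          exact mul_le_mul_of_nonneg_left
            (hlo s (Nat.le_of_lt_succ (Nat.lt_succ_of_lt (Finset.mem_range.mp hs))) i)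
            (abs_nonneg _)
        have hA' : (((nbr ε x k i).card : ℝ) - 1) * m0
            ≤ ∑ j ∈ (nbr ε x k i).erase i, x k j := by
          have h := Finset.card_nsmul_le_sum ((nbr ε x k i).erase i) (x k) m0
            (fun j _ => hlo k le_rfl j)
          rw [Finset.card_erase_of_mem hi, nsmul_eq_mul] at h
          have : (((nbr ε x k i).card - 1 : ℕ) : ℝ) = ((nbr ε x k i).card : ℝ) - 1 := by
            push_cast [Nat.cast_sub hcard]; ring
          rw [this] at h
          exact h
        rw [hdyn k i]
        constructor
        · have h3 : (1 - S) * m0 ≤ (1 - S) * x k i :=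
            mul_le_mul_of_nonneg_left (hlo k le_rfl i) (by linarith)
          have step : (((nbr ε x k i).card : ℝ) - 1) * m0 / ((nbr ε x k i).card : ℝ) +
              (1 / ((nbr ε x k i).card : ℝ)) * (S * m0 + (1 - S) * m0)
              ≤ (∑ j ∈ (nbr ε x k i).erase i, x k j) / ((nbr ε x k i).card : ℝ) +
                (1 / ((nbr ε x k i).card : ℝ)) *
                  ((∑ s ∈ Finset.range k, |glCoeff α (k + 1 - s)| * x s i) +
                    (1 - S) * x k i) := by
            gcongr
          refine le_trans (le_of_eq ?_) step
          field_simp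
          ring
        · have h3 : (1 - S) * x k i ≤ (1 - S) * M0 :=
            mul_le_mul_of_nonneg_left (hup k le_rfl i) (by linarith)
          have step : (∑ j ∈ (nbr ε x k i).erase i, x k j) / ((nbr ε x k i).card : ℝ) +
                (1 / ((nbr ε x k i).card : ℝ)) *
                  ((∑ s ∈ Finset.range k, |glCoeff α (k + 1 - s)| * x s i) +
                    (1 - S) * x k i)
              ≤ (((nbr ε x k i).card : ℝ) - 1) * M0 / ((nbr ε x k i).card : ℝ) +
              (1 / ((nbr ε x k i).card : ℝ)) * (S * M0 + (1 - S) * M0) := by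
            gcongr
          refine le_trans step (le_of_eq ?_)
          field_simp
          ring
  constructor
  · intro k
    have h1 : Finset.univ.sup' hne (x k) ≤ M0 :=
      Finset.sup'_le _ _ (fun i _ => (key k i).2)
    have h2 : m0 ≤ Finset.univ.inf' hne (x k) :=
      Finset.le_inf' _ _ (fun i _ => (key k i).1)
    linarith
  · intro hd k i j
    simp only [nbr, Finset.mem_filter, Finset.mem_univ, true_and]
    rw [abs_sub_le_iff]
    have hi := key k i
    have hj := key k j
    constructor <;> linarith [hi.1, hi.2, hj.1, hj.2]
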